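/- (Lemma 6) Define u_k(x) := x·f_q'(h_k(x))/β for k ≥ 0. Then for each fixed integer n ≥ 1, as θ ↑ 0 (θ real and negative, so that e^θ ∈ (0,1)), ln ∏_{k=0}^{n−1} u_k(e^θ) is asymptotically equivalent to −(1 − u(e^θ)/β)·n − γ_q·θ·∑_{k=0}^{n−1} u(e^θ)^k, i.e. the ratio of the two expressions tends to 1 as θ ↑ 0. -/

import Mathlib

open Filter Topology

section Helpers
open Finset

lemma aux_summable_pow {a : ℕ → ℝ} (ha : Summable a) (hnn : ∀ k, 0 ≤ a k)
    {s : ℝ} (hs : s ∈ Set.Icc (0:ℝ) 1) : Summable (fun k => a k * s ^ k) := by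
  refine ha.of_nonneg_of_le (fun k => mul_nonneg (hnn k) (pow_nonneg hs.1 k)) (fun k => ?_)
  calc a k * s ^ k ≤ a k * 1 := by
        exact mul_le_mul_of_nonneg_left (pow_le_one₀ hs.1 hs.2) (hnn k)
    _ = a k := mul_one _

lemma aux_summable_geom {a : ℕ → ℝ} (hnn : ∀ k, 0 ≤ a k)
    (hka : Summable (fun k : ℕ => (k:ℝ) * a k))
    {s : ℝ} (hs : s ∈ Set.Icc (0:ℝ) 1) :
    Summable (fun k => a k * ∑ i ∈ Finset.range k, s ^ i) := by
  refine hka.of_nonneg_of_le (fun k => mul_nonneg (hnn k)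
    (Finset.sum_nonneg fun i _ => pow_nonneg hs.1 i)) (fun k => ?_)
  have : ∑ i ∈ Finset.range k, s ^ i ≤ (k:ℝ) := by
    calc ∑ i ∈ Finset.range k, s ^ i ≤ ∑ i ∈ Finset.range k, (1:ℝ) :=
          Finset.sum_le_sum fun i _ => pow_le_one₀ hs.1 hs.2
      _ = (k:ℝ) := by simp
  calc a k * ∑ i ∈ Finset.range k, s ^ i ≤ a k * (k:ℝ) :=
        mul_le_mul_of_nonneg_left this (hnn k)
    _ = (k:ℝ) * a k := mul_comm _ _

lemma tendsto_slopefun {a : ℕ → ℝ} (hnn : ∀ k, 0 ≤ a k)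
    (hka : Summable (fun k : ℕ => (k:ℝ) * a k)) :
    Tendsto (fun s => ∑' k, a k * ∑ i ∈ Finset.range k, s ^ i) (𝓝[Set.Icc (0:ℝ) 1] 1)
      (𝓝 (∑' k : ℕ, (k:ℝ) * a k)) := by
  have hcont : ContinuousOn (fun s => ∑' k, a k * ∑ i ∈ Finset.range k, s ^ i)
      (Set.Icc (0:ℝ) 1) := by
    refine (tendstoUniformlyOn_tsum hka (fun k x hx => ?_)).continuousOn
      (Filter.Eventually.of_forall fun t => ?_).frequently
    · rw [Real.norm_eq_abs, abs_mul, abs_of_nonneg (hnn k), abs_of_nonneg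
        (Finset.sum_nonneg fun i _ => pow_nonneg hx.1 i)]
      calc a k * ∑ i ∈ Finset.range k, x ^ i ≤ a k * (k:ℝ) := by
            refine mul_le_mul_of_nonneg_left ?_ (hnn k)
            calc ∑ i ∈ Finset.range k, x ^ i ≤ ∑ i ∈ Finset.range k, (1:ℝ) :=
                  Finset.sum_le_sum fun i _ => pow_le_one₀ hx.1 hx.2
              _ = (k:ℝ) := by simp
        _ = (k:ℝ) * a k := mul_comm _ _
    · exact continuousOn_finset_sum t fun k _ =>
        (continuous_const.mul (continuous_finset_sum _ fun i _ => continuous_pow i)).continuousOn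
  have h1 : (1:ℝ) ∈ Set.Icc (0:ℝ) 1 := by norm_num
  have := hcont.continuousWithinAt h1
  have h2 : (∑' (k:ℕ), (k:ℝ) * a k) = ∑' (k:ℕ), a k * ∑ i ∈ Finset.range k, (1:ℝ)^i := by
    simp [mul_comm]
  rw [h2]
  exact this

lemma slope_id {a : ℕ → ℝ} (ha : Summable a) (hnn : ∀ k, 0 ≤ a k)
    (hka : Summable (fun k : ℕ => (k:ℝ) * a k)) {s : ℝ} (hs : s ∈ Set.Icc (0:ℝ) 1) :
    (∑' k, a k) - ∑' k, a k * s ^ k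
      = (1 - s) * ∑' k, a k * ∑ i ∈ Finset.range k, s ^ i := by
  rw [← tsum_mul_left, ← Summable.tsum_sub ha (aux_summable_pow ha hnn hs)]
  refine tsum_congr fun k => ?_
  have := geom_sum_mul s k
  linear_combination (a k) * this

lemma hasDWA_tsum_pow {a : ℕ → ℝ} (ha : Summable a) (hnn : ∀ k, 0 ≤ a k)
    (hka : Summable (fun k : ℕ => (k:ℝ) * a k)) :
    HasDerivWithinAt (fun s => ∑' k, a k * s ^ k) (∑' k : ℕ, (k:ℝ) * a k)
      (Set.Icc (0:ℝ) 1) 1 := by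
  rw [hasDerivWithinAt_iff_tendsto_slope]
  have hmono : 𝓝[Set.Icc (0:ℝ) 1 \ {1}] (1:ℝ) ≤ 𝓝[Set.Icc (0:ℝ) 1] 1 :=
    nhdsWithin_mono _ Set.diff_subset
  refine Tendsto.congr' ?_ ((tendsto_slopefun hnn hka).mono_left hmono)
  filter_upwards [self_mem_nhdsWithin] with s hs
  obtain ⟨hs1, hs2⟩ := hs
  have hne : s - 1 ≠ 0 := sub_ne_zero.2 (by simpa using hs2)
  have hF1 : (∑' k, a k * (1:ℝ) ^ k) = ∑' k, a k := by simp
  have := slope_id ha hnn hka hs1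
  rw [slope_def_field, hF1]
  field_simp
  linarith [this]

private lemma div_div_aux (a b t : ℝ) (ht : t ≠ 0) : (a / t) / (b / t) = a / b := by
  rcases eq_or_ne b 0 with rb | rb
  · simp [rb]
  · field_simp

private lemma sum_geom_aux (β : ℝ) : ∀ m : ℕ,
    (1 - β) * ∑ k ∈ Finset.range m, (∑ j ∈ Finset.range k, β ^ j)
      = (m : ℝ) - ∑ j ∈ Finset.range m, β ^ j := by
  intro m
  induction m with
  | zero => simp
  | succ p ih =>
    rw [Finset.sum_range_succ, mul_add, ih, Finset.sum_range_succ _ p]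
    have hg := geom_sum_mul β p
    push_cast
    linear_combination (-1 : ℝ) * hg

end Helpers

set_option maxHeartbeats 2000000 in

/- Setup: `fq` is the probability generating function of a subcritical offspring law `π`
(with derivative functions `fq'`, `fq''` given by the differentiated power series, so that
`fq' 1`, `fq'' 1` are the left limits at `1`), mean `β = fq'(1-) ∈ (0,1)`, finite
`b_q = fq''(1-)`, `γ_q = b_q/(β(1-β))`; `H` is the recursively defined two-variable
generating function `H 0 s x = s`, `H (n+1) s x = x · fq (H n s x)` (so `h_n x = H n 1 x`),
and `h x = lim_n H n 1 x` is the total-progeny generating function, satisfying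
`h x = x · fq (h x)` and `h 1 = 1`. -/
theorem log_prod_uk_asymptotics
    (π : ℕ → ℝ) (hπ_nn : ∀ k, 0 ≤ π k) (hπ_sum : ∑' k, π k = 1)
    (hπ0 : 0 < π 0) (hπ01 : π 0 + π 1 < 1)
    (fq fq' fq'' : ℝ → ℝ)
    (hfq : ∀ s, fq s = ∑' k, π k * s ^ k)
    (hfq' : ∀ s, fq' s = ∑' k : ℕ, ((k : ℝ) + 1) * π (k + 1) * s ^ k)
    (hfq'' : ∀ s, fq'' s = ∑' k : ℕ, ((k : ℝ) + 2) * ((k : ℝ) + 1) * π (k + 2) * s ^ k)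
    (β : ℝ) (hβ : β = fq' 1) (hβ_pos : 0 < β) (hβ_lt : β < 1)
    (bq : ℝ) (hbq : bq = fq'' 1)
    (hbq_fin : Summable fun k : ℕ => ((k : ℝ) + 2) * ((k : ℝ) + 1) * π (k + 2))
    (γq : ℝ) (hγq : γq = bq / (β * (1 - β)))
    (H : ℕ → ℝ → ℝ → ℝ)
    (hH0 : ∀ s x : ℝ, H 0 s x = s)
    (hHrec : ∀ (n : ℕ) (s x : ℝ), H (n + 1) s x = x * fq (H n s x))
    (h : ℝ → ℝ)
    (hh_lim : ∀ x ∈ Set.Icc (0 : ℝ) 1, Tendsto (fun n => H n 1 x) atTop (𝓝 (h x)))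
    (hh_fix : ∀ x ∈ Set.Icc (0 : ℝ) 1, h x = x * fq (h x))
    (hh_one : h 1 = 1)
    (u : ℝ → ℝ) (hu : ∀ x, u x = x * fq' (h x))
    (uk : ℕ → ℝ → ℝ) (huk : ∀ (k : ℕ) (x : ℝ), uk k x = x * fq' (H k 1 x) / β) :
    ∀ n : ℕ, 1 ≤ n →
      Tendsto (fun θ =>
          Real.log (∏ k ∈ Finset.range n, uk k (Real.exp θ)) /
            (-(1 - u (Real.exp θ) / β) * n
              - γq * θ * ∑ k ∈ Finset.range n, u (Real.exp θ) ^ k))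
        (𝓝[<] 0) (𝓝 1) := by
  intro n hn
  -- basic summability
  have hπS : Summable π := by
    by_contra hc
    rw [tsum_eq_zero_of_not_summable hc] at hπ_sum
    norm_num at hπ_sum
  have hS2 : Summable (fun k : ℕ => ((k:ℝ) + 2) * π (k + 2)) := by
    refine hbq_fin.of_nonneg_of_le
      (fun k => mul_nonneg (by positivity) (hπ_nn _)) (fun k => ?_)
    have hk0 : (0:ℝ) ≤ (k:ℝ) := Nat.cast_nonneg k
    nlinarith [mul_nonneg (mul_nonneg (show (0:ℝ) ≤ (k:ℝ)+2 by positivity) (hπ_nn (k+2))) hk0]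
  have hS1 : Summable (fun k : ℕ => ((k:ℝ) + 1) * π (k + 1)) := by
    rw [← summable_nat_add_iff 1]
    refine hS2.congr fun k => ?_
    push_cast; ring
  have ha1 : Summable (fun k : ℕ => (k:ℝ) * π k) := by
    rw [← summable_nat_add_iff 1]
    refine hS1.congr fun k => ?_
    push_cast; ring
  have ha2 : Summable (fun k : ℕ => (k:ℝ) * (((k:ℝ) + 1) * π (k + 1))) := by
    rw [← summable_nat_add_iff 1]
    refine hbq_fin.congr fun k => ?_
    push_cast; ring
  -- values at 1
  have hβval : β = ∑' k : ℕ, (k:ℝ) * π k := by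
    rw [hβ, hfq' 1]
    rw [Summable.tsum_eq_zero_add ha1]
    simp only [Nat.cast_zero, zero_mul, zero_add]
    refine (tsum_congr fun k => ?_).symm
    push_cast; ring
  have hbqval : bq = ∑' k : ℕ, (k:ℝ) * (((k:ℝ) + 1) * π (k + 1)) := by
    rw [hbq, hfq'' 1]
    rw [Summable.tsum_eq_zero_add ha2]
    simp only [Nat.cast_zero, zero_mul, zero_add]
    refine (tsum_congr fun k => ?_).symm
    push_cast; ring
  have hfq1 : fq 1 = 1 := by rw [hfq]; simpa using hπ_sum
  have hfq'1 : fq' 1 = β := hβ.symm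
  have haS1nn : ∀ k : ℕ, (0:ℝ) ≤ ((k:ℝ) + 1) * π (k + 1) :=
    fun k => mul_nonneg (by positivity) (hπ_nn _)
  -- derivatives of fq, fq' at 1 within Icc 0 1
  have hfqfun : fq = fun s => ∑' k, π k * s ^ k := funext hfq
  have hfq'fun : fq' = fun s => ∑' k : ℕ, (((k:ℝ) + 1) * π (k + 1)) * s ^ k := by
    funext s; rw [hfq' s]
  have Dfq : HasDerivWithinAt fq β (Set.Icc (0:ℝ) 1) 1 := by
    rw [hfqfun, hβval]; exact hasDWA_tsum_pow hπS hπ_nn ha1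
  have Dfq' : HasDerivWithinAt fq' bq (Set.Icc (0:ℝ) 1) 1 := by
    rw [hfq'fun, hbqval]; exact hasDWA_tsum_pow hS1 haS1nn ha2
  -- bounds for fq
  have fq_mem : ∀ s ∈ Set.Icc (0:ℝ) 1, fq s ∈ Set.Icc (0:ℝ) 1 := by
    intro s hs
    constructor
    · rw [hfq]
      exact tsum_nonneg fun k => mul_nonneg (hπ_nn k) (pow_nonneg hs.1 k)
    · rw [hfq, ← hπ_sum]
      refine Summable.tsum_le_tsum (fun k => ?_) (aux_summable_pow hπS hπ_nn hs) hπS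
      calc π k * s ^ k ≤ π k * 1 :=
            mul_le_mul_of_nonneg_left (pow_le_one₀ hs.1 hs.2) (hπ_nn k)
        _ = π k := mul_one _
  -- the slope function Gπ
  set Gπ : ℝ → ℝ := fun s => ∑' k, π k * ∑ i ∈ Finset.range k, s ^ i with hGπ
  have hGπ_le : ∀ s ∈ Set.Icc (0:ℝ) 1, Gπ s ≤ β := by
    intro s hs
    rw [hβval]
    refine Summable.tsum_le_tsum (fun k => ?_) (aux_summable_geom hπ_nn ha1 hs) ha1
    calc π k * ∑ i ∈ Finset.range k, s ^ i ≤ π k * (k:ℝ) := by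
          refine mul_le_mul_of_nonneg_left ?_ (hπ_nn k)
          calc ∑ i ∈ Finset.range k, s ^ i ≤ ∑ i ∈ Finset.range k, (1:ℝ) :=
                Finset.sum_le_sum fun i _ => pow_le_one₀ hs.1 hs.2
            _ = (k:ℝ) := by simp
      _ = (k:ℝ) * π k := mul_comm _ _
  have hGπ_nonneg : ∀ s ∈ Set.Icc (0:ℝ) 1, 0 ≤ Gπ s := by
    intro s hs
    exact tsum_nonneg fun k => mul_nonneg (hπ_nn k)
      (Finset.sum_nonneg fun i _ => pow_nonneg hs.1 i)
  have hfq_slope : ∀ s ∈ Set.Icc (0:ℝ) 1, 1 - fq s = (1 - s) * Gπ s := by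
    intro s hs
    have := slope_id hπS hπ_nn ha1 hs
    rw [hπ_sum] at this
    rw [hfq]; exact this
  have hfq_lb : ∀ s ∈ Set.Icc (0:ℝ) 1, 1 - β * (1 - s) ≤ fq s := by
    intro s hs
    have h1 := hfq_slope s hs
    have h2 := hGπ_le s hs
    have h3 : (1:ℝ) - s ≥ 0 := by linarith [hs.2]
    nlinarith
  -- H facts
  have Hmem : ∀ (k : ℕ), ∀ x ∈ Set.Icc (0:ℝ) 1, H k 1 x ∈ Set.Icc (0:ℝ) 1 := by
    intro k
    induction k with
    | zero => intro x hx; rw [hH0]; exact ⟨zero_le_one, le_refl 1⟩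
    | succ m ih =>
      intro x hx
      rw [hHrec]
      have h1 := fq_mem _ (ih x hx)
      exact ⟨mul_nonneg hx.1 h1.1, by nlinarith [hx.1, hx.2, h1.1, h1.2]⟩
  have H1 : ∀ k : ℕ, H k 1 1 = 1 := by
    intro k
    induction k with
    | zero => rw [hH0]
    | succ m ih => rw [hHrec, ih, hfq1, one_mul]
  -- h facts
  have hmem : ∀ x ∈ Set.Icc (0:ℝ) 1, h x ∈ Set.Icc (0:ℝ) 1 := by
    intro x hx
    exact isClosed_Icc.mem_of_tendsto (hh_lim x hx)
      (Filter.Eventually.of_forall fun k => Hmem k x hx)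
  have h_ub : ∀ x ∈ Set.Icc (0:ℝ) 1, h x ≤ 1 := fun x hx => (hmem x hx).2
  have h_lb : ∀ x ∈ Set.Icc (0:ℝ) 1, 1 - (1 - x) / (1 - β) ≤ h x := by
    intro x hx
    have hfix := hh_fix x hx
    have hm := hmem x hx
    have hlow := hfq_lb _ hm
    have key : h x * (1 - x * β) ≥ x * (1 - β) := by nlinarith [hx.1, hx.2, hm.1, hm.2]
    have hden : 0 < 1 - β := by linarith
    have key2 : (1 - h x) * (1 - β) ≤ 1 - x := by
      nlinarith [key, mul_nonneg (mul_nonneg hβ_pos.le (by linarith [hm.2] : (0:ℝ) ≤ 1 - h x))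
        (by linarith [hx.2] : (0:ℝ) ≤ 1 - x)]
    have h3 : 1 - h x ≤ (1 - x) / (1 - β) := (le_div_iff₀ hden).2 key2
    linarith
  have h_tendsto : Tendsto h (𝓝[Set.Icc (0:ℝ) 1] 1) (𝓝 1) := by
    have hlowt : Tendsto (fun x : ℝ => 1 - (1 - x) / (1 - β)) (𝓝[Set.Icc (0:ℝ) 1] 1) (𝓝 1) := by
      have : ContinuousAt (fun x : ℝ => 1 - (1 - x) / (1 - β)) 1 := by fun_prop
      have h2 := this.tendsto.mono_left (nhdsWithin_le_nhds (s := Set.Icc (0:ℝ) 1))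
      simpa using h2
    have hupt : Tendsto (fun _ : ℝ => (1:ℝ)) (𝓝[Set.Icc (0:ℝ) 1] 1) (𝓝 1) := tendsto_const_nhds
    refine tendsto_of_tendsto_of_tendsto_of_le_of_le' hlowt hupt ?_ ?_
    · filter_upwards [self_mem_nhdsWithin] with x hx; exact h_lb x hx
    · filter_upwards [self_mem_nhdsWithin] with x hx; exact h_ub x hx
  have h_tendsto' : Tendsto h (𝓝[Set.Icc (0:ℝ) 1 \ {1}] 1) (𝓝[Set.Icc (0:ℝ) 1] 1) := by
    rw [tendsto_nhdsWithin_iff]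
    constructor
    · exact h_tendsto.mono_left (nhdsWithin_mono _ Set.diff_subset)
    · filter_upwards [self_mem_nhdsWithin] with x hx; exact hmem x hx.1
  have GπCont : Tendsto Gπ (𝓝[Set.Icc (0:ℝ) 1] 1) (𝓝 β) := by
    rw [hβval]; exact tendsto_slopefun hπ_nn ha1
  have Dh : HasDerivWithinAt h (1 / (1 - β)) (Set.Icc (0:ℝ) 1) 1 := by
    rw [hasDerivWithinAt_iff_tendsto_slope]
    have hgc : Tendsto (fun x => 1 - x * Gπ (h x)) (𝓝[Set.Icc (0:ℝ) 1 \ {1}] 1) (𝓝 (1 - β)) := by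
      have hid : Tendsto (fun x : ℝ => x) (𝓝[Set.Icc (0:ℝ) 1 \ {1}] 1) (𝓝 1) :=
        tendsto_id.mono_left nhdsWithin_le_nhds
      have := (GπCont.comp h_tendsto')
      have h2 := hid.mul this
      rw [one_mul] at h2
      simpa using (tendsto_const_nhds (x := (1:ℝ))).sub h2
    have hne : (1:ℝ) - β ≠ 0 := by linarith
    have hdiv := (tendsto_const_nhds (x := (1:ℝ))).div hgc hne
    refine Tendsto.congr' ?_ hdiv
    filter_upwards [self_mem_nhdsWithin] with x hx
    obtain ⟨hx1, hx2⟩ := hx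
    have hxne : x - 1 ≠ 0 := sub_ne_zero.2 (by simpa using hx2)
    have hm := hmem x hx1
    have hfix := hh_fix x hx1
    have hslope := hfq_slope _ hm
    have hdenpos : 0 < 1 - x * Gπ (h x) := by
      have h1 := hGπ_le _ hm
      have h2 := hGπ_nonneg _ hm
      nlinarith [hx1.1, hx1.2]
    simp only [Pi.div_apply]
    rw [slope_def_field, hh_one]
    rw [div_eq_div_iff (ne_of_gt hdenpos) hxne]
    linear_combination x * hslope - hfix
  -- θ-side
  set T : Set ℝ := Set.Iic 0 with hT
  have expmem : ∀ θ ∈ T, Real.exp θ ∈ Set.Icc (0:ℝ) 1 := by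
    intro θ hθ
    refine ⟨(Real.exp_pos θ).le, ?_⟩
    calc Real.exp θ ≤ Real.exp 0 := Real.exp_le_exp.2 hθ
      _ = 1 := Real.exp_zero
  have Dexp : HasDerivWithinAt Real.exp 1 T 0 := by
    have := (Real.hasDerivAt_exp 0).hasDerivWithinAt (s := T)
    rwa [Real.exp_zero] at this
  set d : ℕ → ℝ := fun k => ∑ j ∈ Finset.range k, β ^ j with hd
  have hd0 : d 0 = 0 := by simp [hd]
  have hdsucc : ∀ k, d (k + 1) = 1 + β * d k := by
    intro k
    simp only [hd, geom_sum_succ']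
    linear_combination (-1 : ℝ) * geom_sum_mul β k
  have Hval0 : ∀ k : ℕ, H k 1 (Real.exp 0) = 1 := fun k => by rw [Real.exp_zero, H1]
  have HmapsTo : ∀ k : ℕ, Set.MapsTo (fun θ => H k 1 (Real.exp θ)) T (Set.Icc (0:ℝ) 1) :=
    fun k θ hθ => Hmem k _ (expmem θ hθ)
  have DH : ∀ k : ℕ, HasDerivWithinAt (fun θ => H k 1 (Real.exp θ)) (d k) T 0 := by
    intro k
    induction k with
    | zero =>
      rw [hd0]
      have : (fun θ : ℝ => H 0 1 (Real.exp θ)) = fun _ : ℝ => (1:ℝ) := by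
        funext θ; rw [hH0]
      rw [this]
      exact hasDerivWithinAt_const _ _ _
    | succ m ih =>
      have hfun : (fun θ : ℝ => H (m+1) 1 (Real.exp θ))
          = fun θ : ℝ => Real.exp θ * fq (H m 1 (Real.exp θ)) := by
        funext θ; rw [hHrec]
      rw [hfun]
      have inner : HasDerivWithinAt (fun θ => fq (H m 1 (Real.exp θ))) (β * d m) T 0 := by
        have := Dfq.comp_of_eq (x := 0) ih (HmapsTo m) (Hval0 m).symm
        simpa [Function.comp_def] using this
      have hmul := Dexp.mul inner
      refine hmul.congr_deriv ?_
      rw [Hval0 m, hfq1, Real.exp_zero, hdsucc]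
      ring
  have Dfq'H : ∀ k : ℕ, HasDerivWithinAt (fun θ => fq' (H k 1 (Real.exp θ))) (bq * d k) T 0 := by
    intro k
    have := Dfq'.comp_of_eq (x := 0) (DH k) (HmapsTo k) (Hval0 k).symm
    simpa [Function.comp_def] using this
  set e : ℕ → ℝ := fun k => (β + bq * d k) / β with he
  have Duk : ∀ k : ℕ, HasDerivWithinAt (fun θ => uk k (Real.exp θ)) (e k) T 0 := by
    intro k
    have hfun : (fun θ : ℝ => uk k (Real.exp θ))
        = fun θ : ℝ => Real.exp θ * fq' (H k 1 (Real.exp θ)) / β := by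
      funext θ; rw [huk]
    rw [hfun]
    have := (Dexp.mul (Dfq'H k)).div_const β
    refine this.congr_deriv ?_
    rw [Hval0 k, hfq'1, Real.exp_zero, he]
    ring
  have ukval : ∀ k : ℕ, uk k 1 = 1 := by
    intro k
    rw [huk, H1, hfq'1, one_mul, div_self hβ_pos.ne']
  have DP : ∀ m : ℕ, HasDerivWithinAt (fun θ => ∏ k ∈ Finset.range m, uk k (Real.exp θ))
      (∑ k ∈ Finset.range m, e k) T 0 := by
    intro m
    induction m with
    | zero =>
      simp only [Finset.range_zero, Finset.prod_empty, Finset.sum_empty]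
      exact hasDerivWithinAt_const _ _ _
    | succ p ih =>
      simp only [Finset.prod_range_succ, Finset.sum_range_succ]
      have hmul := ih.mul (Duk p)
      refine hmul.congr_deriv ?_
      have hP1 : (∏ k ∈ Finset.range p, uk k (Real.exp 0)) = 1 := by
        rw [Real.exp_zero]
        exact Finset.prod_eq_one fun k _ => ukval k
      rw [hP1, Real.exp_zero, ukval p]
      ring
  set c : ℝ := ∑ k ∈ Finset.range n, e k with hc
  have hP0 : (∏ k ∈ Finset.range n, uk k (Real.exp 0)) = 1 := by
    rw [Real.exp_zero]; exact Finset.prod_eq_one fun k _ => ukval k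
  have DN : HasDerivWithinAt (fun θ => Real.log (∏ k ∈ Finset.range n, uk k (Real.exp θ)))
      c T 0 := by
    have := HasDerivAt.comp_hasDerivWithinAt_of_eq (x := (0:ℝ))
      (Real.hasDerivAt_log one_ne_zero) (DP n) hP0.symm
    rw [hc]
    simpa [Function.comp_def] using this
  -- derivative of denominator
  have hexpT : Set.MapsTo Real.exp T (Set.Icc (0:ℝ) 1) := fun θ hθ => expmem θ hθ
  have Dhexp : HasDerivWithinAt (fun θ => h (Real.exp θ)) (1 / (1 - β) * 1) T 0 := by
    have := Dh.comp_of_eq (x := 0) Dexp hexpT (by rw [Real.exp_zero])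
    simpa [Function.comp_def] using this
  have hmapsTo2 : Set.MapsTo (fun θ => h (Real.exp θ)) T (Set.Icc (0:ℝ) 1) :=
    fun θ hθ => hmem _ (expmem θ hθ)
  have hval2 : h (Real.exp 0) = 1 := by rw [Real.exp_zero, hh_one]
  have Dfq'h : HasDerivWithinAt (fun θ => fq' (h (Real.exp θ))) (bq * (1 / (1 - β) * 1)) T 0 := by
    have := Dfq'.comp_of_eq (x := 0) Dhexp hmapsTo2 hval2.symm
    simpa [Function.comp_def] using this
  have Du0 : HasDerivWithinAt (fun θ => u (Real.exp θ))
      (1 * fq' (h (Real.exp 0)) + Real.exp 0 * (bq * (1 / (1 - β) * 1))) T 0 := by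
    have hfun : (fun θ : ℝ => u (Real.exp θ)) = fun θ : ℝ => Real.exp θ * fq' (h (Real.exp θ)) := by
      funext θ; rw [hu]
    rw [hfun]
    exact Dexp.mul Dfq'h
  have huval : u (Real.exp 0) = β := by
    rw [Real.exp_zero, hu, hh_one, hfq'1, one_mul]
  have hβne : (1:ℝ) - β ≠ 0 := by linarith
  have Du : HasDerivWithinAt (fun θ => u (Real.exp θ)) (β + bq / (1 - β)) T 0 := by
    convert Du0 using 1
    rw [hval2, hfq'1, Real.exp_zero]
    field_simp
  have DA : HasDerivWithinAt (fun θ => -(1 - u (Real.exp θ) / β) * (n:ℝ))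
      ((β + bq / (1 - β)) / β * (n:ℝ)) T 0 := by
    have := (((Du.div_const β).const_sub 1).neg).mul_const (n:ℝ)
    refine this.congr_deriv ?_
    ring
  have DS : HasDerivWithinAt (fun θ => ∑ k ∈ Finset.range n, u (Real.exp θ) ^ k)
      (∑ k ∈ Finset.range n, (k:ℕ) * u (Real.exp 0) ^ (k - 1) * (β + bq / (1 - β))) T 0 :=
    HasDerivWithinAt.fun_sum fun k _ => Du.fun_pow k
  have DB : HasDerivWithinAt (fun θ => γq * θ * ∑ k ∈ Finset.range n, u (Real.exp θ) ^ k)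
      ((γq * 1) * (∑ k ∈ Finset.range n, u (Real.exp 0) ^ k)
        + (γq * 0) * (∑ k ∈ Finset.range n, (k:ℕ) * u (Real.exp 0) ^ (k - 1)
            * (β + bq / (1 - β)))) T 0 := by
    have hid : HasDerivWithinAt (fun θ : ℝ => γq * θ) (γq * 1) T 0 :=
      (hasDerivWithinAt_id 0 T).const_mul γq
    exact hid.mul DS
  have hc_eq : c = (n:ℝ) + γq * ((n:ℝ) - d n) := by
    have h1 : c = (n:ℝ) + (bq / β) * ∑ k ∈ Finset.range n, d k := by
      rw [hc]
      have : ∀ k ∈ Finset.range n, e k = 1 + (bq / β) * d k := by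
        intro k _
        rw [he]
        field_simp
      rw [Finset.sum_congr rfl this, Finset.sum_add_distrib, ← Finset.mul_sum]
      simp
    have h2 := sum_geom_aux β n
    rw [h1, hγq]
    have h3 : ∑ k ∈ Finset.range n, d k = ((n:ℝ) - d n) / (1 - β) := by
      rw [eq_div_iff hβne, mul_comm]
      exact h2
    rw [h3]
    field_simp
  have DD : HasDerivWithinAt (fun θ => -(1 - u (Real.exp θ) / β) * (n:ℝ)
      - γq * θ * ∑ k ∈ Finset.range n, u (Real.exp θ) ^ k) c T 0 := by
    have hDD := DA.sub DB
    simp only [mul_zero, zero_mul, mul_one, add_zero, huval] at hDD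
    refine hDD.congr_deriv ?_
    have hdn : (∑ k ∈ Finset.range n, β ^ k) = d n := by simp [hd]
    rw [hdn, hc_eq, hγq]
    field_simp
    ring
  -- positivity of c
  have hbq_nn : 0 ≤ bq := by
    rw [hbqval]
    refine tsum_nonneg fun k => ?_
    have h1 : (0:ℝ) ≤ π (k+1) := hπ_nn (k+1)
    have h2 : (0:ℝ) ≤ (k:ℝ) := Nat.cast_nonneg k
    exact mul_nonneg h2 (mul_nonneg (by linarith) h1)
  have hd_nn : ∀ k : ℕ, 0 ≤ d k := by
    intro k
    rw [hd]
    exact Finset.sum_nonneg fun j _ => pow_nonneg hβ_pos.le j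
  have he_ge : ∀ k ∈ Finset.range n, (1:ℝ) ≤ e k := by
    intro k _
    rw [he, le_div_iff₀ hβ_pos, one_mul]
    nlinarith [mul_nonneg hbq_nn (hd_nn k)]
  have hcpos : 0 < c := by
    have h1 : (n:ℝ) ≤ c := by
      rw [hc]
      calc (n:ℝ) = ∑ _k ∈ Finset.range n, (1:ℝ) := by simp
        _ ≤ ∑ k ∈ Finset.range n, e k := Finset.sum_le_sum he_ge
    have h2 : (1:ℝ) ≤ (n:ℝ) := by exact_mod_cast hn
    linarith
  have hcne : c ≠ 0 := ne_of_gt hcpos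
  -- slopes
  have hNslope := hasDerivWithinAt_iff_tendsto_slope.mp DN
  have hDslope := hasDerivWithinAt_iff_tendsto_slope.mp DD
  have hsetT : T \ {0} = Set.Iio (0:ℝ) := by rw [hT]; exact Set.Iic_diff_right
  rw [hsetT] at hNslope hDslope
  have hdiv := hNslope.div hDslope hcne
  rw [div_self hcne] at hdiv
  refine Tendsto.congr' ?_ hdiv
  filter_upwards [self_mem_nhdsWithin] with θ hθ
  have hθne : θ ≠ 0 := ne_of_lt hθ
  have hN0 : Real.log (∏ k ∈ Finset.range n, uk k (Real.exp 0)) = 0 := by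
    rw [hP0, Real.log_one]
  have hD0 : -(1 - u (Real.exp 0) / β) * (n:ℝ)
      - γq * (0:ℝ) * ∑ k ∈ Finset.range n, u (Real.exp 0) ^ k = 0 := by
    rw [huval, div_self hβ_pos.ne']
    ring
  simp only [Pi.div_apply, slope_def_field]
  rw [hN0, hD0, sub_zero, sub_zero, sub_zero]
  exact div_div_aux _ _ θ hθne
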